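/- (Double-Rayleigh plus LOS CDF) Let γ̄ > 0 and 0 < β < 1, and let f(t) denote the DRLOS density, equal to (2/((1-β)γ̄)) I₀(2√(t/((1-β)γ̄))) K₀(2√(β/(1-β))) for 0 < t < βγ̄ and (2/((1-β)γ̄)) K₀(2√(t/((1-β)γ̄))) I₀(2√(β/(1-β))) for t > βγ̄. Then for 0 < γ < βγ̄: ∫₀^γ f(t) dt = (2/√(1-β)) K₀(2√(β/(1-β))) √(γ/γ̄) I₁(2√(γ/((1-β)γ̄))); and for γ > βγ̄: ∫₀^γ f(t) dt = c + (2/√(1-β)) I₀(2√(β/(1-β))) [ √β K₁(2√(β/(1-β))) - √(γ/γ̄) K₁(2√(γ/((1-β)γ̄))) ], where c = 2√(β/(1-β)) K₀(2√(β/(1-β))) I₁(2√(β/(1-β))). -/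

import Mathlib

open MeasureTheory Real

/-- Modified Bessel function of the first kind and order zero:
`I₀(z) = ∑_{k=0}^∞ (z²/4)^k / (k!)²`. -/
noncomputable def besselI0 (z : ℝ) : ℝ :=
  ∑' k : ℕ, (z ^ 2 / 4) ^ k / ((Nat.factorial k : ℝ)) ^ 2

/-- Modified Bessel function of the first kind and order one:
`I₁(z) = ∑_{k=0}^∞ (z/2)^{2k+1} / (k! (k+1)!)`. -/
noncomputable def besselI1 (z : ℝ) : ℝ :=
  ∑' k : ℕ, (z / 2) ^ (2 * k + 1) / ((Nat.factorial k : ℝ) * (Nat.factorial (k + 1) : ℝ))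

/-- Modified Bessel function of the second kind and order zero:
`K₀(z) = ∫₀^∞ e^{-z cosh t} dt`. -/
noncomputable def besselK0 (z : ℝ) : ℝ :=
  ∫ t in Set.Ioi (0 : ℝ), Real.exp (-z * Real.cosh t)

/-- Modified Bessel function of the second kind and order one:
`K₁(z) = ∫₀^∞ e^{-z cosh t} cosh t dt`. -/
noncomputable def besselK1 (z : ℝ) : ℝ :=
  ∫ t in Set.Ioi (0 : ℝ), Real.exp (-z * Real.cosh t) * Real.cosh t

lemma K0int {z : ℝ} (hz : 0 < z) :
    IntegrableOn (fun t => Real.exp (-z * Real.cosh t)) (Set.Ioi 0) := by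
  have h : IntegrableOn (fun t => Real.exp (-z/2) * Real.exp (-(z/2) * t)) (Set.Ioi 0) :=
    ((exp_neg_integrableOn_Ioi 0 (by linarith)).const_mul _)
  refine h.mono' ?_ ?_
  · exact (Continuous.aestronglyMeasurable (by continuity))
  · filter_upwards [self_mem_ae_restrict measurableSet_Ioi] with t ht
    rw [Real.norm_eq_abs, abs_of_pos (exp_pos _), ← Real.exp_add]
    apply Real.exp_le_exp.2
    have h1 : (1 + t) / 2 ≤ Real.cosh t := by
      rw [Real.cosh_eq]
      have := Real.add_one_le_exp t
      have := Real.exp_pos (-t)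
      linarith
    nlinarith [le_of_lt hz]

lemma K1int {z : ℝ} (hz : 0 < z) :
    IntegrableOn (fun t => Real.exp (-z * Real.cosh t) * Real.cosh t) (Set.Ioi 0) := by
  have h : IntegrableOn (fun t => (2/z) * Real.exp (-(z/2) * Real.cosh t)) (Set.Ioi 0) :=
    (K0int (by linarith : (0:ℝ) < z/2)).const_mul _
  refine h.mono' (Continuous.aestronglyMeasurable (by continuity)) ?_
  filter_upwards [] with t
  have hc : (0:ℝ) < Real.cosh t := Real.cosh_pos t
  rw [Real.norm_eq_abs, abs_of_pos (by positivity)]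
  -- exp(-z c) * c ≤ (2/z) exp(-(z/2) c)  ⟺  c * exp(-(z/2) c) ≤ 2/z  ⟺ (z/2) c ≤ exp((z/2)c)
  have key : (z/2) * Real.cosh t ≤ Real.exp ((z/2) * Real.cosh t) :=
    le_trans (by linarith [Real.add_one_le_exp ((z/2) * Real.cosh t)]) (le_refl _)
  have h2 : Real.exp (-z * Real.cosh t) * Real.cosh t
      = Real.exp (-(z/2) * Real.cosh t) * (Real.cosh t * Real.exp (-(z/2) * Real.cosh t)) := by
    rw [mul_comm (Real.cosh t), ← mul_assoc, ← Real.exp_add]; ring_nf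
  rw [h2]
  have hu : (0:ℝ) < (z/2) * Real.cosh t := by positivity
  have h3 : Real.cosh t * Real.exp (-((z/2) * Real.cosh t)) ≤ 2/z := by
    rw [Real.exp_neg]
    have : (Real.exp ((z/2) * Real.cosh t))⁻¹ ≤ ((z/2) * Real.cosh t)⁻¹ :=
      inv_anti₀ hu key
    calc Real.cosh t * (Real.exp ((z/2) * Real.cosh t))⁻¹
        ≤ Real.cosh t * ((z/2) * Real.cosh t)⁻¹ := by
          exact mul_le_mul_of_nonneg_left this hc.le
      _ = 2/z := by field_simp
  calc Real.exp (-(z/2) * Real.cosh t) * (Real.cosh t * Real.exp (-(z/2) * Real.cosh t))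
      ≤ Real.exp (-(z/2) * Real.cosh t) * (2/z) := by
        apply mul_le_mul_of_nonneg_left _ (Real.exp_pos _).le
        rw [neg_mul]; exact h3
    _ = 2/z * Real.exp (-(z/2) * Real.cosh t) := by ring

lemma Aint {z : ℝ} (hz : 0 < z) :
    IntegrableOn (fun s => (z / Real.cosh s) * Real.exp (-z * Real.cosh s)) (Set.Ioi 0) := by
  refine ((K0int hz).const_mul z).mono' (Continuous.aestronglyMeasurable (by
    exact (continuous_const.div Real.continuous_cosh (fun s => (Real.cosh_pos s).ne')).mul
      (by continuity))) ?_
  filter_upwards [] with s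
  rw [Real.norm_eq_abs, abs_of_nonneg (by positivity)]
  have h1 : z / Real.cosh s ≤ z :=
    div_le_self hz.le (Real.one_le_cosh s)
  exact mul_le_mul_of_nonneg_right h1 (Real.exp_pos _).le

lemma Bint {z : ℝ} (hz : 0 < z) :
    IntegrableOn (fun s => (1 / Real.cosh s ^ 2) * Real.exp (-z * Real.cosh s)) (Set.Ioi 0) := by
  refine (K0int hz).mono' (Continuous.aestronglyMeasurable (by
    exact (continuous_const.div (Real.continuous_cosh.pow 2)
      (fun s => (pow_pos (Real.cosh_pos s) 2).ne')).mul (by continuity))) ?_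
  filter_upwards [] with s
  rw [Real.norm_eq_abs, abs_of_nonneg (by positivity)]
  have h1 : 1 / Real.cosh s ^ 2 ≤ 1 := by
    rw [div_le_one (by positivity)]
    nlinarith [Real.one_le_cosh s]
  nlinarith [Real.exp_pos (-z * Real.cosh s)]

lemma exp_cosh_tendsto {z : ℝ} (hz : 0 < z) :
    Filter.Tendsto (fun s => Real.exp (-z * Real.cosh s)) Filter.atTop (nhds 0) := by
  have h1 : Filter.Tendsto Real.cosh Filter.atTop Filter.atTop := by
    apply Filter.tendsto_atTop_mono (fun x => ?_) (Filter.tendsto_atTop_add_const_left _ 1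
      Filter.tendsto_id |>.atTop_div_const (by norm_num : (0:ℝ) < 2))
    rw [Real.cosh_eq]
    have := Real.add_one_le_exp x
    have := (Real.exp_pos (-x)).le
    simp only [id_eq, Pi.add_apply]
    linarith
  have h2 : Filter.Tendsto (fun s => -z * Real.cosh s) Filter.atTop Filter.atBot :=
    Filter.Tendsto.const_mul_atTop_of_neg (by linarith) h1
  exact Real.tendsto_exp_atBot.comp h2

lemma key_K {z : ℝ} (hz : 0 < z) :
    ∫ s in Set.Ioi (0:ℝ), (z / Real.cosh s + 1 / Real.cosh s ^ 2) * Real.exp (-z * Real.cosh s)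
      = z * besselK1 z := by
  set A : ℝ → ℝ := fun s => (z / Real.cosh s) * Real.exp (-z * Real.cosh s) with hA
  set B : ℝ → ℝ := fun s => (1 / Real.cosh s ^ 2) * Real.exp (-z * Real.cosh s) with hB
  set C : ℝ → ℝ := fun s => z * (Real.exp (-z * Real.cosh s) * Real.cosh s) with hC
  have hCint : IntegrableOn C (Set.Ioi 0) := (K1int hz).const_mul z
  -- the IBP: derivative of g = sinh/cosh * exp(-z cosh)
  have hderiv : ∀ s : ℝ, HasDerivAt (fun s => Real.sinh s / Real.cosh s * Real.exp (-z * Real.cosh s))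
      (B s + A s - C s) s := by
    intro s
    have hc := (Real.cosh_pos s).ne'
    have h1 : HasDerivAt (fun s => Real.sinh s / Real.cosh s)
        ((Real.cosh s * Real.cosh s - Real.sinh s * Real.sinh s) / Real.cosh s ^ 2) s :=
      (Real.hasDerivAt_sinh s).div (Real.hasDerivAt_cosh s) hc
    have h2 : HasDerivAt (fun s => Real.exp (-z * Real.cosh s))
        (Real.exp (-z * Real.cosh s) * (-z * Real.sinh s)) s :=
      (((Real.hasDerivAt_cosh s).const_mul (-z))).exp
    have := h1.mul h2
    refine this.congr_deriv ?_
    have hs2 : Real.sinh s * Real.sinh s = Real.cosh s ^ 2 - 1 := by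
      have := Real.sinh_sq s; nlinarith [this]
    simp only [hA, hB, hC]
    field_simp
    ring_nf
    rw [Real.sinh_sq]; ring
  have g0 : Real.sinh 0 / Real.cosh 0 * Real.exp (-z * Real.cosh 0) = 0 := by simp
  have htends : Filter.Tendsto (fun s => Real.sinh s / Real.cosh s * Real.exp (-z * Real.cosh s))
      Filter.atTop (nhds 0) := by
    refine squeeze_zero_norm (fun s => ?_) (exp_cosh_tendsto hz)
    rw [norm_mul, Real.norm_eq_abs, Real.norm_eq_abs, abs_of_pos (Real.exp_pos _)]
    have h1 : |Real.sinh s / Real.cosh s| ≤ 1 := by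
      rw [abs_div, abs_of_pos (Real.cosh_pos s), div_le_one (Real.cosh_pos s), Real.abs_sinh]
      calc Real.sinh |s| ≤ Real.cosh |s| := by
            have := Real.cosh_sub_sinh |s|
            have := (Real.exp_pos (-|s|)).le
            linarith
        _ = Real.cosh s := by rw [Real.cosh_abs]
    nlinarith [Real.exp_pos (-z * Real.cosh s)]
  have hDint : IntegrableOn (fun s => B s + A s) (Set.Ioi 0) := by
    exact (Bint hz).add (Aint hz)
  have hint : IntegrableOn (fun s => B s + A s - C s) (Set.Ioi 0) := by
    exact hDint.sub hCint
  have h0 := integral_Ioi_of_hasDerivAt_of_tendsto' (fun x _ => hderiv x) hint htends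
  rw [g0, sub_zero, integral_sub hDint hCint, sub_eq_zero] at h0
  have hC' : ∫ s in Set.Ioi (0:ℝ), C s = z * besselK1 z := by
    simp only [hC]
    rw [MeasureTheory.integral_const_mul, besselK1]
  calc ∫ s in Set.Ioi (0:ℝ), (z / Real.cosh s + 1 / Real.cosh s ^ 2) * Real.exp (-z * Real.cosh s)
      = ∫ s in Set.Ioi (0:ℝ), (B s + A s) := by
        apply integral_congr_ae; filter_upwards [] with s; simp only [hA, hB]; ring
    _ = z * besselK1 z := by rw [show (∫ s in Set.Ioi (0:ℝ), (B s + A s)) = ∫ s in Set.Ioi (0:ℝ), C s from h0, hC']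

lemma inner_ftc {a : ℝ} (ha : 0 < a) {c : ℝ} (hc : 1 ≤ c) {t1 t2 : ℝ} (h1 : 0 < t1)
    (h12 : t1 ≤ t2) :
    ∫ t in t1..t2, (2/a) * Real.exp (-(2 * Real.sqrt (t/a)) * c)
      = ((2 * Real.sqrt (t1/a) / c + 1/c^2) * Real.exp (-(2 * Real.sqrt (t1/a)) * c))
        - ((2 * Real.sqrt (t2/a) / c + 1/c^2) * Real.exp (-(2 * Real.sqrt (t2/a)) * c)) := by
  have hc0 : (0:ℝ) < c := lt_of_lt_of_le zero_lt_one hc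
  set G : ℝ → ℝ := fun t => -((2 * Real.sqrt (t/a) / c + 1/c^2) * Real.exp (-(2 * Real.sqrt (t/a)) * c)) with hG
  have key : ∀ u ∈ Set.uIcc t1 t2, HasDerivAt G ((2/a) * Real.exp (-(2 * Real.sqrt (u/a)) * c)) u := by
    intro u hu
    have hu0 : 0 < u := lt_of_lt_of_le h1 (by
      rcases Set.mem_uIcc.1 hu with h | h
      · exact h.1
      · exact le_trans h12 h.1)
    set W := Real.sqrt (u/a) with hW
    have hW0 : 0 < W := Real.sqrt_pos.2 (div_pos hu0 ha)
    have hw : HasDerivAt (fun t => Real.sqrt (t/a)) (1 / (2 * W) * (1/a)) u := by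
      have h5 : HasDerivAt (fun t : ℝ => t/a) (1/a) u := (hasDerivAt_id u).div_const a
      have h6 := (Real.hasDerivAt_sqrt (ne_of_gt (div_pos hu0 ha))).comp u h5
      simpa [hW, Function.comp_def] using h6
    have hexp : HasDerivAt (fun t => Real.exp (-(2 * Real.sqrt (t/a)) * c))
        (Real.exp (-(2 * W) * c) * (-(2 * (1 / (2 * W) * (1/a))) * c)) u :=
      (((hw.const_mul 2).neg.mul_const c)).exp
    have hpoly : HasDerivAt (fun t => 2 * Real.sqrt (t/a) / c + 1/c^2)
        (2 * (1 / (2 * W) * (1/a)) / c) u :=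
      ((hw.const_mul 2).div_const c).add_const _
    have hD := (hpoly.mul hexp).neg
    simp only [← hW] at hD ⊢
    refine hD.congr_deriv ?_
    field_simp
    ring
  have hcont : Continuous (fun t => (2/a) * Real.exp (-(2 * Real.sqrt (t/a)) * c)) := by
    have : Continuous (fun t : ℝ => Real.sqrt (t/a)) := Real.continuous_sqrt.comp (continuous_id.div_const a)
    continuity
  have := intervalIntegral.integral_eq_sub_of_hasDerivAt key (hcont.intervalIntegrable t1 t2)
  rw [this, hG]
  ring

lemma ABint {z : ℝ} (hz : 0 < z) :
    IntegrableOn (fun s => (z / Real.cosh s + 1 / Real.cosh s ^ 2) * Real.exp (-z * Real.cosh s))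
      (Set.Ioi 0) := by
  have h : IntegrableOn (fun s => (z / Real.cosh s) * Real.exp (-z * Real.cosh s)
      + (1 / Real.cosh s ^ 2) * Real.exp (-z * Real.cosh s)) (Set.Ioi 0) := by
    exact (Aint hz).add (Bint hz)
  exact h.congr_fun (fun s _ => by ring) measurableSet_Ioi

lemma K0_part {a : ℝ} (ha : 0 < a) {t1 t2 : ℝ} (h1 : 0 < t1) (h12 : t1 ≤ t2) :
    ∫ t in t1..t2, (2/a) * besselK0 (2 * Real.sqrt (t/a))
      = 2 * Real.sqrt (t1/a) * besselK1 (2 * Real.sqrt (t1/a))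
        - 2 * Real.sqrt (t2/a) * besselK1 (2 * Real.sqrt (t2/a)) := by
  have hz1 : 0 < 2 * Real.sqrt (t1/a) := by positivity
  have hz2 : 0 < 2 * Real.sqrt (t2/a) :=
    mul_pos two_pos (Real.sqrt_pos.2 (div_pos (lt_of_lt_of_le h1 h12) ha))
  rw [intervalIntegral.integral_of_le h12]
  have hpt : ∀ t : ℝ, (2/a) * besselK0 (2 * Real.sqrt (t/a))
      = ∫ s in Set.Ioi (0:ℝ), (2/a) * Real.exp (-(2 * Real.sqrt (t/a)) * Real.cosh s) := by
    intro t
    rw [besselK0, MeasureTheory.integral_const_mul]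
  have hswap : ∫ t in Set.Ioc t1 t2, (2/a) * besselK0 (2 * Real.sqrt (t/a))
      = ∫ s in Set.Ioi (0:ℝ), ∫ t in Set.Ioc t1 t2,
          (2/a) * Real.exp (-(2 * Real.sqrt (t/a)) * Real.cosh s) := by
    rw [MeasureTheory.integral_congr_ae (Filter.Eventually.of_forall fun t => hpt t)]
    apply MeasureTheory.integral_integral_swap
    have hmeas : AEStronglyMeasurable
        (Function.uncurry fun t s => (2/a) * Real.exp (-(2 * Real.sqrt (t/a)) * Real.cosh s))
        ((volume.restrict (Set.Ioc t1 t2)).prod (volume.restrict (Set.Ioi 0))) := by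
      apply Continuous.aestronglyMeasurable
      apply continuous_const.mul
      apply Real.continuous_exp.comp
      exact ((continuous_const.mul (Real.continuous_sqrt.comp
        ((continuous_fst).div_const a))).neg).mul (Real.continuous_cosh.comp continuous_snd)
    have hbound : Integrable
        (fun p : ℝ × ℝ => (1:ℝ) * ((2/a) * Real.exp (-(2 * Real.sqrt (t1/a)) * Real.cosh p.2)))
        ((volume.restrict (Set.Ioc t1 t2)).prod (volume.restrict (Set.Ioi 0))) := by
      exact Integrable.mul_prod
        (MeasureTheory.integrableOn_const (C := (1:ℝ)) measure_Ioc_lt_top.ne)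
        ((K0int hz1).const_mul (2/a))
    refine hbound.mono' hmeas ?_
    rw [MeasureTheory.Measure.prod_restrict]
    filter_upwards [MeasureTheory.ae_restrict_mem (measurableSet_Ioc.prod measurableSet_Ioi)]
      with p hp
    simp only [Function.uncurry, one_mul]
    rw [Real.norm_eq_abs, abs_of_pos (by positivity)]
    have hmono : Real.sqrt (t1/a) ≤ Real.sqrt (p.1/a) := by
      apply Real.sqrt_le_sqrt; gcongr; exact hp.1.1.le
    have hcpos : (0:ℝ) < Real.cosh p.2 := Real.cosh_pos _
    gcongr
  -- now compute the inner integral and conclude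
  have hinner : ∀ s ∈ Set.Ioi (0:ℝ),
      (∫ t in Set.Ioc t1 t2, (2/a) * Real.exp (-(2 * Real.sqrt (t/a)) * Real.cosh s))
        = ((2 * Real.sqrt (t1/a)) / Real.cosh s + 1 / Real.cosh s ^ 2)
            * Real.exp (-(2 * Real.sqrt (t1/a)) * Real.cosh s)
          - ((2 * Real.sqrt (t2/a)) / Real.cosh s + 1 / Real.cosh s ^ 2)
            * Real.exp (-(2 * Real.sqrt (t2/a)) * Real.cosh s) := by
    intro s _
    rw [← intervalIntegral.integral_of_le h12]
    have := inner_ftc ha (Real.one_le_cosh s) h1 h12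
    rw [this]
  rw [hswap, MeasureTheory.setIntegral_congr_fun measurableSet_Ioi hinner]
  have hG1 := key_K hz1
  have hG2 := key_K hz2
  rw [MeasureTheory.integral_sub (ABint hz1) (ABint hz2), hG1, hG2]


lemma summable_I0 (x : ℝ) (hx : 0 ≤ x) : Summable (fun k : ℕ => x ^ k / ((Nat.factorial k : ℝ)) ^ 2) := by
  apply Summable.of_nonneg_of_le (fun k => by positivity)
    (fun k => ?_) (Real.summable_pow_div_factorial x)
  have h1 : (1:ℝ) ≤ (Nat.factorial k : ℝ) := by exact_mod_cast Nat.one_le_iff_ne_zero.2 (Nat.factorial_ne_zero k)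
  have h2 : (0:ℝ) < (Nat.factorial k : ℝ) := by positivity
  rw [div_le_div_iff₀ (by positivity) h2]
  nlinarith [mul_nonneg (pow_nonneg hx k) (mul_nonneg h2.le (sub_nonneg.2 h1))]

lemma I0_sqrt {x : ℝ} (hx : 0 ≤ x) :
    besselI0 (2 * Real.sqrt x) = ∑' k : ℕ, x ^ k / ((Nat.factorial k : ℝ)) ^ 2 := by
  unfold besselI0
  congr 1; funext k; congr 2
  rw [mul_pow, Real.sq_sqrt hx]; ring

lemma I1_sqrt {x : ℝ} (hx : 0 ≤ x) :
    2 * Real.sqrt x * besselI1 (2 * Real.sqrt x)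
      = ∑' k : ℕ, 2 * x ^ (k+1) / ((Nat.factorial k : ℝ) * (Nat.factorial (k+1) : ℝ)) := by
  unfold besselI1
  rw [← tsum_mul_left]
  congr 1; funext k
  have h1 : (2 * Real.sqrt x / 2) = Real.sqrt x := by ring
  rw [h1]
  have h2 : 2 * Real.sqrt x * (Real.sqrt x ^ (2*k+1) / ((Nat.factorial k : ℝ) * (Nat.factorial (k+1) : ℝ)))
      = 2 * (Real.sqrt x ^ (2*k+2)) / ((Nat.factorial k : ℝ) * (Nat.factorial (k+1) : ℝ)) := by
    rw [pow_succ]; ring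
  rw [h2]
  congr 2
  rw [show 2*k+2 = 2*(k+1) by ring, pow_mul, Real.sq_sqrt hx]

lemma Fk_integral {a : ℝ} (ha : 0 < a) {γ : ℝ} (hγ : 0 ≤ γ) (k : ℕ) :
    ∫ t in Set.Ioc (0:ℝ) γ, (2/a) * ((t/a) ^ k / ((Nat.factorial k : ℝ)) ^ 2)
      = 2 * (γ/a) ^ (k+1) / ((Nat.factorial k : ℝ) * (Nat.factorial (k+1) : ℝ)) := by
  rw [← intervalIntegral.integral_of_le hγ]
  have h1 : ∀ t : ℝ, (2/a) * ((t/a) ^ k / ((Nat.factorial k : ℝ)) ^ 2)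
      = (2/a) / (a^k * ((Nat.factorial k : ℝ))^2) * t ^ k := by
    intro t; rw [div_pow]; field_simp
  simp_rw [h1]
  rw [intervalIntegral.integral_const_mul, integral_pow]
  have hfk : (0:ℝ) < (Nat.factorial k : ℝ) := by positivity
  have hfk1 : ((Nat.factorial (k+1) : ℝ)) = (k+1) * (Nat.factorial k : ℝ) := by
    rw [Nat.factorial_succ]; push_cast; ring
  rw [zero_pow (Nat.succ_ne_zero k), sub_zero, hfk1, div_pow]
  have ha' : a ≠ 0 := ha.ne'
  have hk1 : ((k:ℝ)+1) ≠ 0 := by positivity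
  have hf : (Nat.factorial k : ℝ) ≠ 0 := hfk.ne'
  field_simp
  ring

lemma summable_V {x : ℝ} (hx : 0 ≤ x) :
    Summable (fun k : ℕ => 2 * x ^ (k+1) / ((Nat.factorial k : ℝ) * (Nat.factorial (k+1) : ℝ))) := by
  apply Summable.of_nonneg_of_le (fun k => by positivity) (fun k => ?_)
    (((Real.summable_pow_div_factorial x).mul_left (2 * x)))
  have h1 : (1:ℝ) ≤ (Nat.factorial (k+1) : ℝ) := by
    exact_mod_cast Nat.one_le_iff_ne_zero.2 (Nat.factorial_ne_zero (k+1))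
  have h2 : (0:ℝ) < (Nat.factorial k : ℝ) := by positivity
  have h3 : (Nat.factorial k : ℝ) ≤ (Nat.factorial k : ℝ) * (Nat.factorial (k+1) : ℝ) := by
    nlinarith
  calc 2 * x ^ (k+1) / ((Nat.factorial k : ℝ) * (Nat.factorial (k+1) : ℝ))
      ≤ 2 * x ^ (k+1) / (Nat.factorial k : ℝ) := by
        apply div_le_div_of_nonneg_left (by positivity) h2 h3
    _ = 2 * x * (x ^ k / (Nat.factorial k : ℝ)) := by rw [pow_succ]; ring

lemma I0_part {a : ℝ} (ha : 0 < a) {γ : ℝ} (hγ : 0 ≤ γ) :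
    ∫ t in (0:ℝ)..γ, (2/a) * besselI0 (2 * Real.sqrt (t/a))
      = 2 * Real.sqrt (γ/a) * besselI1 (2 * Real.sqrt (γ/a)) := by
  have hx : 0 ≤ γ/a := div_nonneg hγ ha.le
  rw [intervalIntegral.integral_of_le hγ, I1_sqrt hx]
  set F : ℕ → ℝ → ℝ := fun k t => (2/a) * ((t/a) ^ k / ((Nat.factorial k : ℝ)) ^ 2) with hF
  have hFint : ∀ k, Integrable (F k) (volume.restrict (Set.Ioc 0 γ)) := by
    intro k
    apply Continuous.integrableOn_Ioc
    exact continuous_const.mul (((continuous_id.div_const a).pow k).div_const _)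
  have hFval : ∀ k, ∫ t in Set.Ioc (0:ℝ) γ, F k t
      = 2 * (γ/a) ^ (k+1) / ((Nat.factorial k : ℝ) * (Nat.factorial (k+1) : ℝ)) :=
    fun k => Fk_integral ha hγ k
  have hFnormval : ∀ k, (∫ t in Set.Ioc (0:ℝ) γ, ‖F k t‖)
      = 2 * (γ/a) ^ (k+1) / ((Nat.factorial k : ℝ) * (Nat.factorial (k+1) : ℝ)) := by
    intro k
    rw [← hFval k]
    apply MeasureTheory.setIntegral_congr_fun measurableSet_Ioc
    intro t ht
    show ‖F k t‖ = F k t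
    rw [Real.norm_eq_abs, abs_of_nonneg]
    have ht0 : 0 ≤ t := ht.1.le
    positivity
  have hsum : Summable fun k => ∫ t in Set.Ioc (0:ℝ) γ, ‖F k t‖ := by
    rw [show (fun k => ∫ t in Set.Ioc (0:ℝ) γ, ‖F k t‖)
      = fun k => 2 * (γ/a) ^ (k+1) / ((Nat.factorial k : ℝ) * (Nat.factorial (k+1) : ℝ)) from
      funext hFnormval]
    exact summable_V hx
  have hswap := MeasureTheory.integral_tsum_of_summable_integral_norm hFint hsum
  rw [show (∫ t in Set.Ioc (0:ℝ) γ, (2/a) * besselI0 (2 * Real.sqrt (t/a)))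
      = ∫ t in Set.Ioc (0:ℝ) γ, ∑' k, F k t from ?_, ← hswap]
  · congr 1; funext k; exact hFval k
  · apply MeasureTheory.setIntegral_congr_fun measurableSet_Ioc
    intro t ht
    have htx : 0 ≤ t/a := div_nonneg ht.1.le ha.le
    show (2/a) * besselI0 (2 * Real.sqrt (t/a)) = ∑' k, F k t
    rw [I0_sqrt htx, ← tsum_mul_left]

lemma K0_nonneg {z : ℝ} : 0 ≤ besselK0 z :=
  MeasureTheory.integral_nonneg (fun t => (Real.exp_pos _).le)

lemma I0_nonneg {z : ℝ} : 0 ≤ besselI0 z :=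
  tsum_nonneg (fun k => by positivity)

lemma K0_anti {z z' : ℝ} (hz : 0 < z) (hzz : z ≤ z') : besselK0 z' ≤ besselK0 z := by
  unfold besselK0
  apply MeasureTheory.setIntegral_mono_on (K0int (lt_of_lt_of_le hz hzz)) (K0int hz)
    measurableSet_Ioi
  intro s _
  apply Real.exp_le_exp.2
  nlinarith [Real.cosh_pos s]

lemma I0_mono {z z' : ℝ} (hz : 0 ≤ z) (hzz : z ≤ z') : besselI0 z ≤ besselI0 z' := by
  unfold besselI0
  apply Summable.tsum_le_tsum _ _ _
  · intro k
    gcongr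
  · exact summable_I0 (z^2/4) (by positivity)
  · exact summable_I0 (z'^2/4) (by positivity)

/-- **Double-Rayleigh plus LOS CDF.** Integrating the piecewise DRLOS density up to `γ`
yields the stated closed forms in the two regimes `0 < γ < βγ̄` and `γ > βγ̄`. -/
theorem drlos_cdf (γbar β : ℝ) (hγbar : 0 < γbar) (hβ0 : 0 < β) (hβ1 : β < 1)
    (f : ℝ → ℝ)
    (hf : ∀ t : ℝ, f t =
      if t < β * γbar then
        (2 / ((1 - β) * γbar)) * besselI0 (2 * Real.sqrt (t / ((1 - β) * γbar))) *
          besselK0 (2 * Real.sqrt (β / (1 - β)))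
      else
        (2 / ((1 - β) * γbar)) * besselK0 (2 * Real.sqrt (t / ((1 - β) * γbar))) *
          besselI0 (2 * Real.sqrt (β / (1 - β)))) :
    (∀ γ : ℝ, 0 < γ → γ < β * γbar →
      ∫ t in (0 : ℝ)..γ, f t
        = (2 / Real.sqrt (1 - β)) * besselK0 (2 * Real.sqrt (β / (1 - β))) *
            Real.sqrt (γ / γbar) * besselI1 (2 * Real.sqrt (γ / ((1 - β) * γbar)))) ∧
    (∀ γ : ℝ, β * γbar < γ →
      ∫ t in (0 : ℝ)..γ, f t
        = (2 * Real.sqrt (β / (1 - β)) * besselK0 (2 * Real.sqrt (β / (1 - β))) *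
            besselI1 (2 * Real.sqrt (β / (1 - β)))) +
          (2 / Real.sqrt (1 - β)) * besselI0 (2 * Real.sqrt (β / (1 - β))) *
            (Real.sqrt β * besselK1 (2 * Real.sqrt (β / (1 - β))) -
              Real.sqrt (γ / γbar) * besselK1 (2 * Real.sqrt (γ / ((1 - β) * γbar))))) := by
  have h1β : 0 < 1 - β := by linarith
  set a := (1 - β) * γbar with ha_def
  have ha : 0 < a := mul_pos h1β hγbar
  have hb : 0 < β * γbar := mul_pos hβ0 hγbar
  have hγ' : γbar ≠ 0 := hγbar.ne'
  have h1β' : (1:ℝ) - β ≠ 0 := h1β.ne'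
  have hsq : ∀ x : ℝ, 0 ≤ x → Real.sqrt (x / a) = Real.sqrt (x / γbar) / Real.sqrt (1 - β) := by
    intro x hx
    rw [show x / a = (x / γbar) / (1 - β) by rw [ha_def, div_div, mul_comm γbar (1 - β)]]
    exact Real.sqrt_div (by positivity) _
  have hsqβ : Real.sqrt (β / (1 - β)) = Real.sqrt β / Real.sqrt (1 - β) :=
    Real.sqrt_div hβ0.le _
  have hba : (β * γbar) / a = β / (1 - β) := by rw [ha_def]; field_simp
  have hs1β : Real.sqrt (1 - β) ≠ 0 := by positivity
  constructor
  · -- part 1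
    intro γ hγ0 hγb
    have heq : Set.EqOn f (fun t => ((2/a) * besselI0 (2 * Real.sqrt (t/a)))
        * besselK0 (2 * Real.sqrt (β / (1 - β)))) (Set.uIcc 0 γ) := by
      intro t ht
      rw [Set.uIcc_of_le hγ0.le] at ht
      rw [hf t, if_pos (by linarith [ht.2] : t < β * γbar)]
    rw [intervalIntegral.integral_congr heq, intervalIntegral.integral_mul_const,
      I0_part ha hγ0.le, hsq γ hγ0.le]
    ring
  · -- part 2
    intro γ hγb2
    have hγ0 : 0 < γ := lt_trans hb hγb2
    set c := 2 * Real.sqrt (β / (1 - β)) with hc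
    set g1 : ℝ → ℝ := fun t => ((2/a) * besselI0 (2 * Real.sqrt (t/a))) * besselK0 c with hg1
    set g2 : ℝ → ℝ := fun t => ((2/a) * besselK0 (2 * Real.sqrt (t/a))) * besselI0 c with hg2
    have hne : ∀ᵐ t : ℝ ∂volume, t ≠ β * γbar := by
      rw [MeasureTheory.ae_iff]
      simp only [not_not, Set.setOf_eq_eq_singleton]
      exact Real.volume_singleton
    -- integrability on [0, b]
    have hg1mono : MonotoneOn g1 (Set.uIcc 0 (β * γbar)) := by
      intro s hs t ht hst
      rw [Set.uIcc_of_le hb.le] at hs ht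
      simp only [hg1]
      apply mul_le_mul_of_nonneg_right _ K0_nonneg
      apply mul_le_mul_of_nonneg_left _ (by positivity)
      apply I0_mono (by positivity)
      have : Real.sqrt (s/a) ≤ Real.sqrt (t/a) := Real.sqrt_le_sqrt (by gcongr)
      linarith
    have hg1int : IntervalIntegrable g1 volume 0 (β * γbar) := hg1mono.intervalIntegrable
    have haeg1 : ∀ᵐ t ∂(volume.restrict (Set.Ioc 0 (β * γbar))), g1 t = f t := by
      filter_upwards [MeasureTheory.ae_restrict_mem measurableSet_Ioc,
        MeasureTheory.ae_restrict_of_ae hne] with t ht htne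
      rw [hf t, if_pos (lt_of_le_of_ne ht.2 htne)]
    have hII1 : IntervalIntegrable f volume 0 (β * γbar) := by
      rw [intervalIntegrable_iff_integrableOn_Ioc_of_le hb.le]
      exact ((intervalIntegrable_iff_integrableOn_Ioc_of_le hb.le).1 hg1int).congr haeg1
    -- integrability on [b, γ]
    have heq2 : Set.EqOn f g2 (Set.uIcc (β * γbar) γ) := by
      intro t ht
      rw [Set.uIcc_of_le hγb2.le] at ht
      rw [hf t, if_neg (not_lt.2 ht.1)]
    have hg2anti : AntitoneOn g2 (Set.uIcc (β * γbar) γ) := by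
      intro s hs t ht hst
      rw [Set.uIcc_of_le hγb2.le] at hs ht
      simp only [hg2]
      apply mul_le_mul_of_nonneg_right _ I0_nonneg
      apply mul_le_mul_of_nonneg_left _ (by positivity)
      apply K0_anti
      · have : 0 < Real.sqrt (s/a) := Real.sqrt_pos.2 (div_pos (lt_of_lt_of_le hb hs.1) ha)
        linarith
      · have : Real.sqrt (s/a) ≤ Real.sqrt (t/a) := Real.sqrt_le_sqrt (by gcongr)
        linarith
    have hII2 : IntervalIntegrable f volume (β * γbar) γ := by
      rw [intervalIntegrable_iff_integrableOn_Ioc_of_le hγb2.le]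
      apply ((intervalIntegrable_iff_integrableOn_Ioc_of_le hγb2.le).1
        hg2anti.intervalIntegrable).congr_fun _ measurableSet_Ioc
      intro t ht
      exact (heq2 (by rw [Set.uIcc_of_le hγb2.le]; exact ⟨ht.1.le, ht.2⟩)).symm
    rw [← intervalIntegral.integral_add_adjacent_intervals hII1 hII2]
    -- first piece
    have hpart1 : ∫ t in (0:ℝ)..(β * γbar), f t
        = (2 * Real.sqrt ((β * γbar)/a) * besselI1 (2 * Real.sqrt ((β * γbar)/a))) * besselK0 c := by
      rw [intervalIntegral.integral_congr_ae ?h, intervalIntegral.integral_mul_const,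
        I0_part ha hb.le]
      case h =>
        filter_upwards [hne] with t htne htmem
        rw [Set.uIoc_of_le hb.le] at htmem
        rw [hf t, if_pos (lt_of_le_of_ne htmem.2 htne)]
    -- second piece
    have hpart2 : ∫ t in (β * γbar)..γ, f t
        = (2 * Real.sqrt ((β * γbar)/a) * besselK1 (2 * Real.sqrt ((β * γbar)/a))
          - 2 * Real.sqrt (γ/a) * besselK1 (2 * Real.sqrt (γ/a))) * besselI0 c := by
      rw [intervalIntegral.integral_congr heq2, intervalIntegral.integral_mul_const,
        K0_part ha hb hγb2.le]
    rw [hpart1, hpart2, hba]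
    rw [hsq γ hγ0.le, hsqβ, hc, hsqβ]
    ring
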